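/- σ_S² ≤ σ_TSLS²; that is, the asymptotic variance of the S estimator of Ansel, Hong and Li (2018) is weakly smaller than the asymptotic variance of the TSLS estimator with covariates and strata fixed effects. -/

import Mathlib

open MeasureTheory ProbabilityTheory Finset

noncomputable section

/-- Population data for a covariate-adaptive randomization (CAR) design:
potential outcomes `Y1, Y0`, potential treatment take-ups `D1, D0` (valued in `{0,1}`),
covariates `X`, stratum `S`, and target assignment probabilities `piS`. -/
structure CARPop (Ω : Type*) [MeasurableSpace Ω] (𝒮 : Type*) [MeasurableSpace 𝒮]
    (d : ℕ) where
  P : Measure Ω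
  Y1 : Ω → ℝ
  Y0 : Ω → ℝ
  D1 : Ω → ℝ
  D0 : Ω → ℝ
  X : Ω → Fin d → ℝ
  S : Ω → 𝒮
  piS : 𝒮 → ℝ

namespace CARPop

variable {Ω : Type*} [MeasurableSpace Ω] {𝒮 : Type*} [MeasurableSpace 𝒮] {d : ℕ}

/-- Potential treatment take-up `D(a)`, with `a : Bool` (`true` = assigned to treatment). -/
def Da (c : CARPop Ω 𝒮 d) (a : Bool) : Ω → ℝ := if a then c.D1 else c.D0

/-- `Y(D(a)) = Y(1)·D(a) + Y(0)·(1 − D(a))`. -/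
def Ya (c : CARPop Ω 𝒮 d) (a : Bool) : Ω → ℝ :=
  fun ω => c.Y1 ω * c.Da a ω + c.Y0 ω * (1 - c.Da a ω)

/-- `W = Y(D(1))`. -/
def W (c : CARPop Ω 𝒮 d) : Ω → ℝ := c.Ya true

/-- `Z = Y(D(0))`. -/
def Z (c : CARPop Ω 𝒮 d) : Ω → ℝ := c.Ya false

/-- The compliers event `{D(1) > D(0)}`. -/
def compliers (c : CARPop Ω 𝒮 d) : Set Ω := {ω | c.D0 ω < c.D1 ω}

/-- The LATE `τ = E[Y(1) − Y(0) | D(1) > D(0)]`. -/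
def tau (c : CARPop Ω 𝒮 d) : ℝ :=
  (∫ ω in c.compliers, (c.Y1 ω - c.Y0 ω) ∂c.P) / (c.P c.compliers).toReal

/-- The stratum event `{S = s}`. -/
def stratum (c : CARPop Ω 𝒮 d) (s : 𝒮) : Set Ω := {ω | c.S ω = s}

/-- Conditional expectation given `S = s`: `E[f | S = s]`. -/
def cEs (c : CARPop Ω 𝒮 d) (s : 𝒮) (f : Ω → ℝ) : ℝ :=
  (∫ ω in c.stratum s, f ω ∂c.P) / (c.P (c.stratum s)).toReal

/-- Conditional expectation given `S`, i.e. `E[f | S]` as the function `ω ↦ E[f | S = S ω]`. -/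
def cES (c : CARPop Ω 𝒮 d) (f : Ω → ℝ) : Ω → ℝ := fun ω => c.cEs (c.S ω) f

/-- Centering at the conditional mean given `S`:  `f − E[f | S]`. -/
def tilt (c : CARPop Ω 𝒮 d) (f : Ω → ℝ) : Ω → ℝ := fun ω => f ω - c.cES f ω

/-- A working model `m(a, s, x)` evaluated along `(S, X)`. -/
def wm (c : CARPop Ω 𝒮 d) (m : Bool → 𝒮 → (Fin d → ℝ) → ℝ) (a : Bool) : Ω → ℝ :=
  fun ω => m a (c.S ω) (c.X ω)

/-- Square-integrability bound for a working model: `E[(m(a,S,X))² | S = s] ≤ C < ∞`. -/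
def WMBound (c : CARPop Ω 𝒮 d) (m : Bool → 𝒮 → (Fin d → ℝ) → ℝ) : Prop :=
  (∀ a : Bool, Measurable (fun ω => m a (c.S ω) (c.X ω))) ∧
    ∃ C : ℝ, ∀ (a : Bool) (s : 𝒮), c.cEs s (fun ω => (m a (c.S ω) (c.X ω)) ^ 2) ≤ C

/-- Influence term `Ξ₁` of the adjusted LATE estimator with working models `mY, mD`. -/
def Xi1 (c : CARPop Ω 𝒮 d) (mY mD : Bool → 𝒮 → (Fin d → ℝ) → ℝ) : Ω → ℝ := fun ω =>
  ((1 - 1 / c.piS (c.S ω)) * c.tilt (c.wm mY true) ω - c.tilt (c.wm mY false) ω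
      + c.tilt c.W ω / c.piS (c.S ω))
    - c.tau * ((1 - 1 / c.piS (c.S ω)) * c.tilt (c.wm mD true) ω
        - c.tilt (c.wm mD false) ω + c.tilt (c.Da true) ω / c.piS (c.S ω))

/-- Influence term `Ξ₀` of the adjusted LATE estimator with working models `mY, mD`. -/
def Xi0 (c : CARPop Ω 𝒮 d) (mY mD : Bool → 𝒮 → (Fin d → ℝ) → ℝ) : Ω → ℝ := fun ω =>
  ((1 / (1 - c.piS (c.S ω)) - 1) * c.tilt (c.wm mY false) ω + c.tilt (c.wm mY true) ω
      - c.tilt c.Z ω / (1 - c.piS (c.S ω)))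
    - c.tau * ((1 / (1 - c.piS (c.S ω)) - 1) * c.tilt (c.wm mD false) ω
        + c.tilt (c.wm mD true) ω - c.tilt (c.Da false) ω / (1 - c.piS (c.S ω)))

/-- Influence term `Ξ₂` (between-strata variation). -/
def Xi2 (c : CARPop Ω 𝒮 d) : Ω → ℝ := fun ω =>
  (c.cES (fun ω' => c.W ω' - c.Z ω') ω - ∫ ω', (c.W ω' - c.Z ω') ∂c.P)
    - c.tau * (c.cES (fun ω' => c.Da true ω' - c.Da false ω') ω
        - ∫ ω', (c.Da true ω' - c.Da false ω') ∂c.P)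

/-- `σ₁² = E[π(S)·Ξ₁²]`. -/
def sigma1Sq (c : CARPop Ω 𝒮 d) (mY mD : Bool → 𝒮 → (Fin d → ℝ) → ℝ) : ℝ :=
  ∫ ω, c.piS (c.S ω) * (c.Xi1 mY mD ω) ^ 2 ∂c.P

/-- `σ₀² = E[(1 − π(S))·Ξ₀²]`. -/
def sigma0Sq (c : CARPop Ω 𝒮 d) (mY mD : Bool → 𝒮 → (Fin d → ℝ) → ℝ) : ℝ :=
  ∫ ω, (1 - c.piS (c.S ω)) * (c.Xi0 mY mD ω) ^ 2 ∂c.P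

/-- `σ₂² = E[Ξ₂²]`. -/
def sigma2Sq (c : CARPop Ω 𝒮 d) : ℝ := ∫ ω, (c.Xi2 ω) ^ 2 ∂c.P

/-- Asymptotic variance `σ² = (σ₁² + σ₀² + σ₂²)/P(D(1) > D(0))²` of the adjusted
LATE estimator with working models `mY, mD`. -/
def sigmaSq (c : CARPop Ω 𝒮 d) (mY mD : Bool → 𝒮 → (Fin d → ℝ) → ℝ) : ℝ :=
  (c.sigma1Sq mY mD + c.sigma0Sq mY mD + c.sigma2Sq) / (c.P c.compliers).toReal ^ 2

/-- The population-level assumptions of the CAR setup (Assumption 1 of the paper). -/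
structure PopAssumptions (c : CARPop Ω 𝒮 d) : Prop where
  prob : IsProbabilityMeasure c.P
  mY1 : Measurable c.Y1
  mY0 : Measurable c.Y0
  mD1 : Measurable c.D1
  mD0 : Measurable c.D0
  mX : Measurable c.X
  mS : Measurable c.S
  d1Bin : ∀ ω, c.D1 ω = 0 ∨ c.D1 ω = 1
  d0Bin : ∀ ω, c.D0 ω = 0 ∨ c.D0 ω = 1
  noDefiers : c.P {ω | c.D1 ω = 0 ∧ c.D0 ω = 1} = 0
  compliersPos : 0 < c.P c.compliers
  strataPos : ∀ s, 0 < c.P (c.stratum s)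
  piRange : ∃ cc : ℝ, 0 < cc ∧ cc < 1 / 2 ∧ ∀ s, cc < c.piS s ∧ c.piS s < 1 - cc
  momentY : ∃ q C : ℝ, 4 ≤ q ∧ ∀ s,
    c.cEs s (fun ω => |c.Y1 ω| ^ q) ≤ C ∧ c.cEs s (fun ω => |c.Y0 ω| ^ q) ≤ C
  intY1sq : Integrable (fun ω => c.Y1 ω ^ 2) c.P
  intY0sq : Integrable (fun ω => c.Y0 ω ^ 2) c.P

section Linear

variable {ι : Type*} [Fintype ι] [DecidableEq ι]

/-- Centered regressor `Ψ̃ₛ = Ψₛ(X) − E[Ψₛ(X) | S = s]`. -/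
def psiTilt (c : CARPop Ω 𝒮 d) (Ψ : 𝒮 → (Fin d → ℝ) → ι → ℝ) (s : 𝒮) : Ω → ι → ℝ :=
  fun ω j => Ψ s (c.X ω) j - c.cEs s (fun ω' => Ψ s (c.X ω') j)

/-- Within-stratum Gram matrix `E[Ψ̃ₛΨ̃ₛᵀ | S = s]`. -/
def gram (c : CARPop Ω 𝒮 d) (Ψ : 𝒮 → (Fin d → ℝ) → ι → ℝ) (s : 𝒮) : Matrix ι ι ℝ :=
  Matrix.of fun i j => c.cEs s (fun ω => c.psiTilt Ψ s ω i * c.psiTilt Ψ s ω j)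

/-- Optimal linear coefficient `θᴸ(a,s) = (E[Ψ̃Ψ̃ᵀ|S=s])⁻¹ E[Ψ̃·Y(D(a)) | S=s]`. -/
def thetaL (c : CARPop Ω 𝒮 d) (Ψ : 𝒮 → (Fin d → ℝ) → ι → ℝ) (a : Bool) (s : 𝒮) : ι → ℝ :=
  Matrix.mulVec (c.gram Ψ s)⁻¹ (fun j => c.cEs s (fun ω => c.psiTilt Ψ s ω j * c.Ya a ω))

/-- Optimal linear coefficient `βᴸ(a,s) = (E[Ψ̃Ψ̃ᵀ|S=s])⁻¹ E[Ψ̃·D(a) | S=s]`. -/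
def betaL (c : CARPop Ω 𝒮 d) (Ψ : 𝒮 → (Fin d → ℝ) → ι → ℝ) (a : Bool) (s : 𝒮) : ι → ℝ :=
  Matrix.mulVec (c.gram Ψ s)⁻¹ (fun j => c.cEs s (fun ω => c.psiTilt Ψ s ω j * c.Da a ω))

/-- Linear working model `x ↦ Ψₛ(x)ᵀ t(a,s)`. -/
def linWM (Ψ : 𝒮 → (Fin d → ℝ) → ι → ℝ) (t : Bool → 𝒮 → ι → ℝ) :
    Bool → 𝒮 → (Fin d → ℝ) → ℝ :=
  fun a s x => ∑ j, Ψ s x j * t a s j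

/-- Asymptotic variance of the LATE estimator with linear adjustments
`μ̄ʸ(a,s,x) = Ψₛ(x)ᵀ t(a,s)` and `μ̄ᴰ(a,s,x) = Ψₛ(x)ᵀ b(a,s)`. -/
def sigmaSqLin (c : CARPop Ω 𝒮 d) (Ψ : 𝒮 → (Fin d → ℝ) → ι → ℝ)
    (t b : Bool → 𝒮 → ι → ℝ) : ℝ :=
  c.sigmaSq (linWM Ψ t) (linWM Ψ b)

/-- Regularity of the regressor `Ψ`: measurability, a conditional moment bound of
order `q > 2`, and eigenvalues of the within-stratum Gram matrices of the centered
regressor bounded away from `0` and `∞`. -/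
def PsiRegular (c : CARPop Ω 𝒮 d) (Ψ : 𝒮 → (Fin d → ℝ) → ι → ℝ) : Prop :=
  (∀ s, Measurable (Ψ s)) ∧
  (∃ q C : ℝ, 2 < q ∧ ∀ s,
      c.cEs s (fun ω => (∑ j, (Ψ (c.S ω) (c.X ω) j) ^ 2) ^ (q / 2)) ≤ C) ∧
  (∃ c' C' : ℝ, 0 < c' ∧ c' ≤ C' ∧ ∀ s, ∀ v : ι → ℝ,
      c' * (∑ j, v j ^ 2) ≤ (∑ j, v j * Matrix.mulVec (c.gram Ψ s) v j) ∧
        (∑ j, v j * Matrix.mulVec (c.gram Ψ s) v j) ≤ C' * (∑ j, v j ^ 2))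

end Linear

end CARPop

namespace CARPop

variable {Ω : Type*} [MeasurableSpace Ω] {𝒮 : Type*} [Fintype 𝒮] [DecidableEq 𝒮]
  [MeasurableSpace 𝒮] {d : ℕ}

/-- Regressor `𝕏 = (Xᵀ, (1{S=s})ₛ)ᵀ` of the TSLS regression. -/
def XX (c : CARPop Ω 𝒮 d) : Ω → (Fin d ⊕ 𝒮) → ℝ := fun ω =>
  Sum.elim (c.X ω) (fun s => if c.S ω = s then 1 else 0)

/-- `E[𝕏𝕏ᵀ]`. -/
def MXX (c : CARPop Ω 𝒮 d) : Matrix (Fin d ⊕ 𝒮) (Fin d ⊕ 𝒮) ℝ :=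
  Matrix.of fun i j => ∫ ω, c.XX ω i * c.XX ω j ∂c.P

/-- TSLS pseudo-true coefficient
`λ* = (E[𝕏𝕏ᵀ])⁻¹ E[𝕏·(π(W − τD(1)) + (1 − π)(Z − τD(0)))]`. -/
def lamStar (c : CARPop Ω 𝒮 d) (pi : ℝ) : (Fin d ⊕ 𝒮) → ℝ :=
  Matrix.mulVec c.MXX⁻¹ (fun i => ∫ ω, c.XX ω i *
    (pi * (c.W ω - c.tau * c.Da true ω) + (1 - pi) * (c.Z ω - c.tau * c.Da false ω)) ∂c.P)

/-- TSLS residual in the treated arm: `W − τD(1) − 𝕏ᵀλ*`. -/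
def eps1 (c : CARPop Ω 𝒮 d) (pi : ℝ) : Ω → ℝ := fun ω =>
  c.W ω - c.tau * c.Da true ω - ∑ i, c.XX ω i * c.lamStar pi i

/-- TSLS residual in the control arm: `Z − τD(0) − 𝕏ᵀλ*`. -/
def eps0 (c : CARPop Ω 𝒮 d) (pi : ℝ) : Ω → ℝ := fun ω =>
  c.Z ω - c.tau * c.Da false ω - ∑ i, c.XX ω i * c.lamStar pi i

/-- Asymptotic variance of the TSLS estimator (homogeneous `π`). -/
def sigmaSqTSLS (c : CARPop Ω 𝒮 d) (pi : ℝ) (γ : 𝒮 → ℝ) : ℝ :=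
  ((∫ ω, (c.eps0 pi ω - c.cES (c.eps0 pi) ω) ^ 2 ∂c.P) / (1 - pi)
    + (∫ ω, (c.eps1 pi ω - c.cES (c.eps1 pi) ω) ^ 2 ∂c.P) / pi
    + (∫ ω, (c.cES (fun ω' => c.W ω' - c.Z ω'
        - c.tau * (c.Da true ω' - c.Da false ω')) ω) ^ 2 ∂c.P)
    + (∫ ω, γ (c.S ω) *
        (c.cES (fun ω' => c.eps1 pi ω' / pi + c.eps0 pi ω' / (1 - pi)) ω) ^ 2 ∂c.P))
    / (∫ ω, (c.Da true ω - c.Da false ω) ∂c.P) ^ 2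

/-- Centered covariate `X̃ₛ = X − E[X | S = s]`. -/
def xTilt (c : CARPop Ω 𝒮 d) (s : 𝒮) : Ω → Fin d → ℝ := fun ω i =>
  c.X ω i - c.cEs s (fun ω' => c.X ω' i)

/-- Within-stratum covariate Gram matrix `E[X̃ₛX̃ₛᵀ | S = s]`. -/
def gramX (c : CARPop Ω 𝒮 d) (s : 𝒮) : Matrix (Fin d) (Fin d) ℝ :=
  Matrix.of fun i j => c.cEs s (fun ω => c.xTilt s ω i * c.xTilt s ω j)

/-- `ν₁ₛ = (E[X̃ₛX̃ₛᵀ|S=s])⁻¹ E[X̃ₛ(W − τD(1))|S=s]`. -/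
def nuYD1 (c : CARPop Ω 𝒮 d) (s : 𝒮) : Fin d → ℝ :=
  Matrix.mulVec (c.gramX s)⁻¹
    (fun i => c.cEs s (fun ω => c.xTilt s ω i * (c.W ω - c.tau * c.Da true ω)))

/-- `ν₀ₛ = (E[X̃ₛX̃ₛᵀ|S=s])⁻¹ E[X̃ₛ(Z − τD(0))|S=s]`. -/
def nuYD0 (c : CARPop Ω 𝒮 d) (s : 𝒮) : Fin d → ℝ :=
  Matrix.mulVec (c.gramX s)⁻¹
    (fun i => c.cEs s (fun ω => c.xTilt s ω i * (c.Z ω - c.tau * c.Da false ω)))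

/-- `ρ(1) = (W − τD(1) − Xᵀν₁ₛ)/π + Xᵀ(ν₁ₛ − ν₀ₛ)`. -/
def rho1 (c : CARPop Ω 𝒮 d) (pi : ℝ) : Ω → ℝ := fun ω =>
  (c.W ω - c.tau * c.Da true ω - ∑ i, c.X ω i * c.nuYD1 (c.S ω) i) / pi
    + ∑ i, c.X ω i * (c.nuYD1 (c.S ω) i - c.nuYD0 (c.S ω) i)

/-- `ρ(0) = (Z − τD(0) − Xᵀν₀ₛ)/(1 − π) − Xᵀ(ν₁ₛ − ν₀ₛ)`. -/
def rho0 (c : CARPop Ω 𝒮 d) (pi : ℝ) : Ω → ℝ := fun ω =>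
  (c.Z ω - c.tau * c.Da false ω - ∑ i, c.X ω i * c.nuYD0 (c.S ω) i) / (1 - pi)
    - ∑ i, c.X ω i * (c.nuYD1 (c.S ω) i - c.nuYD0 (c.S ω) i)

/-- Asymptotic variance of the S estimator of Ansel, Hong and Li (2018). -/
def sigmaSqS (c : CARPop Ω 𝒮 d) (pi : ℝ) : ℝ :=
  ((∫ ω, pi * (c.rho1 pi ω - c.cES (c.rho1 pi) ω) ^ 2 ∂c.P)
    + (∫ ω, (1 - pi) * (c.rho0 pi ω - c.cES (c.rho0 pi) ω) ^ 2 ∂c.P)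
    + (∫ ω, (c.cES (fun ω' => c.W ω' - c.Z ω'
        - c.tau * (c.Da true ω' - c.Da false ω')) ω) ^ 2 ∂c.P))
    / (∫ ω, (c.Da true ω - c.Da false ω) ∂c.P) ^ 2

end CARPop

namespace CARPop

variable {Ω : Type*} [MeasurableSpace Ω] {𝒮 : Type*} [Fintype 𝒮] [DecidableEq 𝒮]
  [MeasurableSpace 𝒮] [MeasurableSingletonClass 𝒮] {d : ℕ}

/-- Linear combination of centered covariates with stratum-dependent coefficients. -/
def XV (c : CARPop Ω 𝒮 d) (v : 𝒮 → Fin d → ℝ) : Ω → ℝ :=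
  fun ω => ∑ i, c.xTilt (c.S ω) ω i * v (c.S ω) i

def h1F (c : CARPop Ω 𝒮 d) : Ω → ℝ := fun ω => c.W ω - c.tau * c.Da true ω

def h0F (c : CARPop Ω 𝒮 d) : Ω → ℝ := fun ω => c.Z ω - c.tau * c.Da false ω

def vlam (c : CARPop Ω 𝒮 d) (pi : ℝ) : 𝒮 → Fin d → ℝ := fun _ i => c.lamStar pi (Sum.inl i)

section Aux

variable {c : CARPop Ω 𝒮 d}

lemma stratMeas (hc : c.PopAssumptions) (s : 𝒮) : MeasurableSet (c.stratum s) :=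
  hc.mS (measurableSet_singleton s)

lemma mPos (hc : c.PopAssumptions) (s : 𝒮) : 0 < (c.P (c.stratum s)).toReal := by
  haveI := hc.prob
  exact ENNReal.toReal_pos (hc.strataPos s).ne' (measure_ne_top _ _)

lemma measS (hc : c.PopAssumptions) (g : 𝒮 → ℝ) : Measurable fun ω => g (c.S ω) :=
  (measurable_of_countable g).comp hc.mS

lemma memS (hc : c.PopAssumptions) (g : 𝒮 → ℝ) :
    MemLp (fun ω => g (c.S ω)) 2 c.P := by
  haveI := hc.prob
  refine MemLp.of_bound (measS hc g).aestronglyMeasurable (∑ s, |g s|)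
    (ae_of_all _ fun ω => ?_)
  calc ‖g (c.S ω)‖ = |g (c.S ω)| := rfl
    _ ≤ ∑ s, |g s| :=
      Finset.single_le_sum (f := fun s => |g s|) (fun s _ => abs_nonneg _) (Finset.mem_univ _)

lemma memMulBdd {f g : Ω → ℝ} (hf : MemLp f 2 c.P) (hg : Measurable g) {C : ℝ}
    (hC : ∀ ω, |g ω| ≤ C) : MemLp (fun ω => f ω * g ω) 2 c.P := by
  refine MemLp.of_le (hf.const_mul C) (hf.aestronglyMeasurable.mul hg.aestronglyMeasurable)
    (ae_of_all _ fun ω => ?_)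
  simp only [norm_mul, Real.norm_eq_abs]
  calc |f ω| * |g ω| ≤ |f ω| * C := mul_le_mul_of_nonneg_left (hC ω) (abs_nonneg _)
    _ ≤ |f ω| * |C| := mul_le_mul_of_nonneg_left (le_abs_self C) (abs_nonneg _)
    _ = |C| * |f ω| := mul_comm _ _

lemma memMulS (hc : c.PopAssumptions) {f : Ω → ℝ} (hf : MemLp f 2 c.P) (g : 𝒮 → ℝ) :
    MemLp (fun ω => f ω * g (c.S ω)) 2 c.P := by
  refine memMulBdd hf (measS hc g) (C := ∑ s, |g s|) (fun ω => ?_)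
  exact Finset.single_le_sum (f := fun s => |g s|) (fun s _ => abs_nonneg _) (Finset.mem_univ _)

lemma intMul {P : Measure Ω} {f g : Ω → ℝ} (hf : MemLp f 2 P) (hg : MemLp g 2 P) :
    Integrable (fun ω => f ω * g ω) P := by
  have h := (((hf.add hg).integrable_sq).sub hf.integrable_sq).sub hg.integrable_sq
  have h2 := h.const_mul (1 / 2 : ℝ)
  refine h2.congr (ae_of_all _ fun ω => ?_)
  simp only [Pi.sub_apply, Pi.add_apply]
  ring

lemma memMulConst {f : Ω → ℝ} (hf : MemLp f 2 c.P) (r : ℝ) :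
    MemLp (fun ω => f ω * r) 2 c.P := by
  simpa [mul_comm] using hf.const_mul r

lemma mXi (hc : c.PopAssumptions) (i : Fin d) : Measurable fun ω => c.X ω i :=
  (measurable_pi_apply i).comp hc.mX

lemma memXi (hc : c.PopAssumptions)
    (hX2 : Integrable (fun ω => ∑ i, (c.X ω i) ^ 2) c.P) (i : Fin d) :
    MemLp (fun ω => c.X ω i) 2 c.P := by
  refine (memLp_two_iff_integrable_sq (mXi hc i).aestronglyMeasurable).mpr ?_
  refine hX2.mono ((mXi hc i).pow_const 2).aestronglyMeasurable (ae_of_all _ fun ω => ?_)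
  simp only [Real.norm_eq_abs, abs_pow, sq_abs]
  calc c.X ω i ^ 2 ≤ ∑ j, c.X ω j ^ 2 :=
        Finset.single_le_sum (f := fun j => c.X ω j ^ 2) (fun j _ => sq_nonneg _)
          (Finset.mem_univ _)
    _ ≤ |∑ j, c.X ω j ^ 2| := le_abs_self _

lemma mDa (hc : c.PopAssumptions) (a : Bool) : Measurable (c.Da a) := by
  cases a
  · exact hc.mD0
  · exact hc.mD1

lemma DaBdd (hc : c.PopAssumptions) (a : Bool) (ω : Ω) : |c.Da a ω| ≤ 1 := by
  cases a
  · rcases hc.d0Bin ω with h | h <;> simp [Da, h]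
  · rcases hc.d1Bin ω with h | h <;> simp [Da, h]

lemma DaBdd' (hc : c.PopAssumptions) (a : Bool) (ω : Ω) : |1 - c.Da a ω| ≤ 1 := by
  cases a
  · rcases hc.d0Bin ω with h | h <;> simp [Da, h]
  · rcases hc.d1Bin ω with h | h <;> simp [Da, h]

lemma memDa (hc : c.PopAssumptions) (a : Bool) : MemLp (c.Da a) 2 c.P := by
  haveI := hc.prob
  exact MemLp.of_bound (mDa hc a).aestronglyMeasurable 1 (ae_of_all _ fun ω => DaBdd hc a ω)

lemma memY1 (hc : c.PopAssumptions) : MemLp c.Y1 2 c.P :=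
  (memLp_two_iff_integrable_sq hc.mY1.aestronglyMeasurable).mpr hc.intY1sq

lemma memY0 (hc : c.PopAssumptions) : MemLp c.Y0 2 c.P :=
  (memLp_two_iff_integrable_sq hc.mY0.aestronglyMeasurable).mpr hc.intY0sq

lemma memYa (hc : c.PopAssumptions) (a : Bool) : MemLp (c.Ya a) 2 c.P := by
  have h1 : MemLp (fun ω => c.Y1 ω * c.Da a ω) 2 c.P :=
    memMulBdd (memY1 hc) (mDa hc a) (fun ω => DaBdd hc a ω)
  have h2 : MemLp (fun ω => c.Y0 ω * (1 - c.Da a ω)) 2 c.P :=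
    memMulBdd (memY0 hc) (measurable_const.sub (mDa hc a)) (fun ω => DaBdd' hc a ω)
  exact h1.add h2

lemma memh1F (hc : c.PopAssumptions) : MemLp c.h1F 2 c.P :=
  (memYa hc true).sub ((memDa hc true).const_mul c.tau)

lemma memh0F (hc : c.PopAssumptions) : MemLp c.h0F 2 c.P :=
  (memYa hc false).sub ((memDa hc false).const_mul c.tau)

lemma memXV (hc : c.PopAssumptions)
    (hX2 : Integrable (fun ω => ∑ i, (c.X ω i) ^ 2) c.P) (v : 𝒮 → Fin d → ℝ) :
    MemLp (c.XV v) 2 c.P := by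
  have : c.XV v = fun ω => ∑ i : Fin d,
      (c.X ω i * v (c.S ω) i - (fun s => c.cEs s (fun ω' => c.X ω' i) * v s i) (c.S ω)) := by
    funext ω
    simp [XV, xTilt, sub_mul]
  rw [this]
  exact memLp_finset_sum _ (fun i _ =>
    (memMulS hc (memXi hc hX2 i) (fun s => v s i)).sub
      (memS hc (fun s => c.cEs s (fun ω' => c.X ω' i) * v s i)))

lemma int_strata (hc : c.PopAssumptions) (f : Ω → ℝ) (hf : Integrable f c.P) :
    ∫ ω, f ω ∂c.P = ∑ s, ∫ ω in c.stratum s, f ω ∂c.P := by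
  have hU : (⋃ s, c.stratum s) = Set.univ := by
    ext ω
    simp only [Set.mem_iUnion, Set.mem_univ, iff_true]
    exact ⟨c.S ω, rfl⟩
  have hd : Pairwise (Function.onFun Disjoint c.stratum) := by
    intro s t hst
    simp only [Function.onFun, Set.disjoint_left]
    rintro ω h1 h2
    exact hst ((show c.S ω = s from h1).symm.trans h2)
  rw [← setIntegral_univ, ← hU, integral_iUnion (fun s => stratMeas hc s) hd
    (hU ▸ hf.integrableOn), tsum_fintype]

lemma setInt (hc : c.PopAssumptions) (s : 𝒮) (f : Ω → ℝ) :
    ∫ ω in c.stratum s, f ω ∂c.P = c.cEs s f * (c.P (c.stratum s)).toReal := by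
  rw [cEs, div_mul_cancel₀]
  exact (mPos hc s).ne'

lemma cEs_congr (hc : c.PopAssumptions) (s : 𝒮) {f g : Ω → ℝ}
    (h : ∀ ω ∈ c.stratum s, f ω = g ω) : c.cEs s f = c.cEs s g := by
  unfold cEs
  rw [setIntegral_congr_fun (stratMeas hc s) h]

lemma cEs_div (s : 𝒮) (f : Ω → ℝ) (r : ℝ) :
    c.cEs s (fun ω => f ω / r) = c.cEs s f / r := by
  unfold cEs
  rw [integral_div, div_right_comm]

lemma cEs_affine (hc : c.PopAssumptions)
    (hX2 : Integrable (fun ω => ∑ i, (c.X ω i) ^ 2) c.P) (s : 𝒮) (f : Ω → ℝ)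
    (hf : Integrable f c.P) (v : 𝒮 → Fin d → ℝ) (g : 𝒮 → ℝ) :
    c.cEs s (fun ω => f ω + (∑ i, c.X ω i * v (c.S ω) i) + g (c.S ω))
      = c.cEs s f + (∑ i, c.cEs s (fun ω' => c.X ω' i) * v s i) + g s := by
  haveI := hc.prob
  have hm := mPos hc s
  have h1 : c.cEs s (fun ω => f ω + (∑ i, c.X ω i * v (c.S ω) i) + g (c.S ω))
      = c.cEs s (fun ω => f ω + (∑ i, c.X ω i * v s i) + g s) := by
    refine cEs_congr hc s (fun ω hω => ?_)
    have hs : c.S ω = s := hω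
    rw [hs]
  rw [h1]
  have hint : ∀ i : Fin d, IntegrableOn (fun ω => c.X ω i * v s i) (c.stratum s) c.P :=
    fun i => (((memXi hc hX2 i).integrable one_le_two).mul_const _).integrableOn
  have hsum : IntegrableOn (fun ω => ∑ i, c.X ω i * v s i) (c.stratum s) c.P :=
    integrable_finset_sum _ (fun i _ => hint i)
  have hconst : IntegrableOn (fun _ : Ω => g s) (c.stratum s) c.P :=
    integrableOn_const (measure_ne_top _ _)
  have ha : IntegrableOn (fun ω => f ω + ∑ i, c.X ω i * v s i) (c.stratum s) c.P :=
    hf.integrableOn.add hsum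
  set m := (c.P (c.stratum s)).toReal with hm_def
  have hXis : ∀ i : Fin d, ∫ ω in c.stratum s, c.X ω i * v s i ∂c.P
      = (c.cEs s (fun ω' => c.X ω' i) * v s i) * m := by
    intro i
    rw [integral_mul_const, setInt hc s]
    ring
  have hI : ∫ ω in c.stratum s, (f ω + (∑ i, c.X ω i * v s i) + g s) ∂c.P
      = (c.cEs s f + (∑ i, c.cEs s (fun ω' => c.X ω' i) * v s i) + g s) * m := by
    rw [integral_add ha hconst, integral_add hf.integrableOn hsum,
      integral_finset_sum _ (fun i _ => hint i), setIntegral_const, measureReal_def, smul_eq_mul,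
      Finset.sum_congr rfl (fun i _ => hXis i), setInt hc s f, ← Finset.sum_mul]
    ring
  show (∫ ω in c.stratum s, (f ω + (∑ i, c.X ω i * v s i) + g s) ∂c.P) / m = _
  rw [hI, mul_div_assoc, div_self hm.ne', mul_one]

lemma XV_neg (v : 𝒮 → Fin d → ℝ) (ω : Ω) :
    c.XV (fun s i => -(v s i)) ω = -c.XV v ω := by
  simp [XV, Finset.sum_neg_distrib]

lemma XV_lin (a b : ℝ) (v w : 𝒮 → Fin d → ℝ) (ω : Ω) :
    c.XV (fun s i => a * v s i + b * w s i) ω = a * c.XV v ω + b * c.XV w ω := by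
  unfold XV
  calc ∑ i, c.xTilt (c.S ω) ω i * (a * v (c.S ω) i + b * w (c.S ω) i)
      = ∑ i, (a * (c.xTilt (c.S ω) ω i * v (c.S ω) i)
          + b * (c.xTilt (c.S ω) ω i * w (c.S ω) i)) :=
        Finset.sum_congr rfl (fun i _ => by ring)
    _ = a * (∑ i, c.xTilt (c.S ω) ω i * v (c.S ω) i)
          + b * (∑ i, c.xTilt (c.S ω) ω i * w (c.S ω) i) := by
        rw [Finset.sum_add_distrib, Finset.mul_sum, Finset.mul_sum]

lemma tilt_affine (hc : c.PopAssumptions)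
    (hX2 : Integrable (fun ω => ∑ i, (c.X ω i) ^ 2) c.P) (f : Ω → ℝ)
    (hf : Integrable f c.P) (v : 𝒮 → Fin d → ℝ) (g : 𝒮 → ℝ) (ω : Ω) :
    (f ω + (∑ i, c.X ω i * v (c.S ω) i) + g (c.S ω))
      - c.cES (fun ω' => f ω' + (∑ i, c.X ω' i * v (c.S ω') i) + g (c.S ω')) ω
    = (f ω - c.cES f ω) + c.XV v ω := by
  have h := cEs_affine hc hX2 (c.S ω) f hf v g
  simp only [cES]
  rw [h]
  have hXV : c.XV v ω = (∑ i, c.X ω i * v (c.S ω) i)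
      - ∑ i, c.cEs (c.S ω) (fun ω' => c.X ω' i) * v (c.S ω) i := by
    simp [XV, xTilt, sub_mul, Finset.sum_sub_distrib]
  rw [hXV]
  ring

lemma ortho (hc : c.PopAssumptions)
    (hX2 : Integrable (fun ω => ∑ i, (c.X ω i) ^ 2) c.P)
    (hgramX : ∀ s, IsUnit (c.gramX s).det) {h : Ω → ℝ} (hh : MemLp h 2 c.P)
    (nu : 𝒮 → Fin d → ℝ)
    (hnu : ∀ s, nu s = Matrix.mulVec (c.gramX s)⁻¹
      (fun i => c.cEs s (fun ω => c.xTilt s ω i * h ω)))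
    (v : 𝒮 → Fin d → ℝ) :
    ∫ ω, (h ω - c.cES h ω - c.XV nu ω) * c.XV v ω ∂c.P = 0 := by
  haveI := hc.prob
  have hmem : MemLp (fun ω => h ω - c.cES h ω - c.XV nu ω) 2 c.P :=
    (hh.sub (memS hc (fun s => c.cEs s h))).sub (memXV hc hX2 nu)
  have hInt : Integrable (fun ω => (h ω - c.cES h ω - c.XV nu ω) * c.XV v ω) c.P :=
    intMul hmem (memXV hc hX2 v)
  rw [int_strata hc _ hInt]
  refine Finset.sum_eq_zero (fun s _ => ?_)
  have hm := mPos hc s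
  set m := (c.P (c.stratum s)).toReal with hm_def
  have hxT : ∀ i, MemLp (fun ω => c.xTilt s ω i) 2 c.P := fun i =>
    (memXi hc hX2 i).sub (memLp_const _)
  have hbig : MemLp (fun ω => h ω - c.cEs s h - ∑ j, c.xTilt s ω j * nu s j) 2 c.P := by
    refine (hh.sub (memLp_const _)).sub ?_
    exact memLp_finset_sum _ (fun j _ => memMulConst (hxT j) _)
  have hcongr : ∫ ω in c.stratum s, (h ω - c.cES h ω - c.XV nu ω) * c.XV v ω ∂c.P
      = ∫ ω in c.stratum s, (∑ i, v s i * (c.xTilt s ω i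
          * (h ω - c.cEs s h - ∑ j, c.xTilt s ω j * nu s j))) ∂c.P := by
    refine setIntegral_congr_fun (stratMeas hc s) (fun ω hω => ?_)
    have hs : c.S ω = s := hω
    simp only [cES, XV, hs]
    rw [mul_comm, Finset.sum_mul]
    exact Finset.sum_congr rfl (fun i _ => by ring)
  rw [hcongr, integral_finset_sum _
    (fun i _ => ((intMul (hxT i) hbig).const_mul _).integrableOn)]
  refine Finset.sum_eq_zero (fun i _ => ?_)
  rw [integral_const_mul]
  have hsplit : (fun ω => c.xTilt s ω i * (h ω - c.cEs s h - ∑ j, c.xTilt s ω j * nu s j))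
      = fun ω => (c.xTilt s ω i * h ω - c.xTilt s ω i * c.cEs s h)
          - ∑ j, (c.xTilt s ω i * c.xTilt s ω j) * nu s j := by
    funext ω
    rw [mul_sub, mul_sub, Finset.mul_sum]
    congr 1
    exact Finset.sum_congr rfl (fun j _ => by ring)
  have i1 : IntegrableOn (fun ω => c.xTilt s ω i * h ω) (c.stratum s) c.P :=
    (intMul (hxT i) hh).integrableOn
  have i2 : IntegrableOn (fun ω => c.xTilt s ω i * c.cEs s h) (c.stratum s) c.P :=
    (((hxT i).integrable one_le_two).mul_const _).integrableOn
  have i3 : ∀ j : Fin d, IntegrableOn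
      (fun ω => (c.xTilt s ω i * c.xTilt s ω j) * nu s j) (c.stratum s) c.P :=
    fun j => ((intMul (hxT i) (hxT j)).mul_const _).integrableOn
  rw [show (∫ ω in c.stratum s, c.xTilt s ω i
        * (h ω - c.cEs s h - ∑ j, c.xTilt s ω j * nu s j) ∂c.P)
      = ∫ ω in c.stratum s, ((c.xTilt s ω i * h ω - c.xTilt s ω i * c.cEs s h)
          - ∑ j, (c.xTilt s ω i * c.xTilt s ω j) * nu s j) ∂c.P from by rw [← hsplit]]
  have i12 : IntegrableOn (fun ω => c.xTilt s ω i * h ω - c.xTilt s ω i * c.cEs s h)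
      (c.stratum s) c.P := i1.sub i2
  rw [integral_sub i12 (integrable_finset_sum _ (fun j _ => i3 j)),
    integral_sub i1 i2, integral_finset_sum _ (fun j _ => i3 j)]
  have e1 : ∫ ω in c.stratum s, c.xTilt s ω i * h ω ∂c.P
      = c.cEs s (fun ω => c.xTilt s ω i * h ω) * m := setInt hc s _
  have exT : ∫ ω in c.stratum s, c.xTilt s ω i ∂c.P = 0 := by
    have hrw : (fun ω => c.xTilt s ω i)
        = fun ω => c.X ω i - c.cEs s (fun ω' => c.X ω' i) := rfl
    rw [hrw, integral_sub (((memXi hc hX2 i).integrable one_le_two).integrableOn)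
      (integrableOn_const (measure_ne_top _ _)), setIntegral_const,
      measureReal_def, smul_eq_mul, setInt hc s]
    ring
  have e2 : ∫ ω in c.stratum s, c.xTilt s ω i * c.cEs s h ∂c.P = 0 := by
    rw [integral_mul_const, exT, zero_mul]
  have e3 : ∀ j : Fin d, ∫ ω in c.stratum s, (c.xTilt s ω i * c.xTilt s ω j) * nu s j ∂c.P
      = (c.cEs s (fun ω => c.xTilt s ω i * c.xTilt s ω j) * m) * nu s j := by
    intro j
    rw [integral_mul_const, setInt hc s]
  have hMv : ∑ j, c.cEs s (fun ω => c.xTilt s ω i * c.xTilt s ω j) * nu s j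
      = c.cEs s (fun ω => c.xTilt s ω i * h ω) := by
    have hfun : (c.gramX s).mulVec (nu s)
        = fun i => c.cEs s (fun ω => c.xTilt s ω i * h ω) := by
      rw [hnu s, Matrix.mulVec_mulVec, Matrix.mul_nonsing_inv _ (hgramX s),
        Matrix.one_mulVec]
    have := congrFun hfun i
    simpa [Matrix.mulVec, dotProduct, gramX] using this
  rw [e1, e2, Finset.sum_congr rfl (fun j _ => e3 j)]
  have hsm : ∑ j, (c.cEs s (fun ω => c.xTilt s ω i * c.xTilt s ω j) * m) * nu s j
      = (∑ j, c.cEs s (fun ω => c.xTilt s ω i * c.xTilt s ω j) * nu s j) * m := by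
    rw [Finset.sum_mul]
    exact Finset.sum_congr rfl (fun j _ => by ring)
  rw [hsm, hMv]
  ring

lemma XV_sub (v w : 𝒮 → Fin d → ℝ) (ω : Ω) :
    c.XV (fun s i => v s i - w s i) ω = c.XV v ω - c.XV w ω := by
  unfold XV
  rw [← Finset.sum_sub_distrib]
  exact Finset.sum_congr rfl (fun i _ => by ring)

lemma tilt_eps1 (hc : c.PopAssumptions)
    (hX2 : Integrable (fun ω => ∑ i, (c.X ω i) ^ 2) c.P) (pi : ℝ) (ω : Ω) :
    c.eps1 pi ω - c.cES (c.eps1 pi) ω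
      = c.h1F ω - c.cES c.h1F ω - c.XV (c.vlam pi) ω := by
  haveI := hc.prob
  have hfun : c.eps1 pi = fun ω => c.h1F ω
      + (∑ i, c.X ω i * (-(c.vlam pi (c.S ω) i)))
      + (fun s => -(c.lamStar pi (Sum.inr s))) (c.S ω) := by
    funext ω
    simp only [eps1, h1F, XX, Fintype.sum_sum_type, Sum.elim_inl, Sum.elim_inr, vlam]
    have hsum : ∑ s' : 𝒮, (if c.S ω = s' then (1:ℝ) else 0) * c.lamStar pi (Sum.inr s')
        = c.lamStar pi (Sum.inr (c.S ω)) := by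
      simp [ite_mul]
    rw [hsum]
    have hneg : ∑ i, c.X ω i * -c.lamStar pi (Sum.inl i)
        = -∑ i, c.X ω i * c.lamStar pi (Sum.inl i) := by
      simp [mul_neg]
    rw [hneg]
    ring
  rw [hfun]
  beta_reduce
  rw [tilt_affine hc hX2 c.h1F ((memh1F hc).integrable one_le_two)
    (fun s i => -(c.vlam pi s i)) (fun s => -(c.lamStar pi (Sum.inr s))) ω]
  rw [XV_neg]
  ring

lemma tilt_eps0 (hc : c.PopAssumptions)
    (hX2 : Integrable (fun ω => ∑ i, (c.X ω i) ^ 2) c.P) (pi : ℝ) (ω : Ω) :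
    c.eps0 pi ω - c.cES (c.eps0 pi) ω
      = c.h0F ω - c.cES c.h0F ω - c.XV (c.vlam pi) ω := by
  haveI := hc.prob
  have hfun : c.eps0 pi = fun ω => c.h0F ω
      + (∑ i, c.X ω i * (-(c.vlam pi (c.S ω) i)))
      + (fun s => -(c.lamStar pi (Sum.inr s))) (c.S ω) := by
    funext ω
    simp only [eps0, h0F, XX, Fintype.sum_sum_type, Sum.elim_inl, Sum.elim_inr, vlam]
    have hsum : ∑ s' : 𝒮, (if c.S ω = s' then (1:ℝ) else 0) * c.lamStar pi (Sum.inr s')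
        = c.lamStar pi (Sum.inr (c.S ω)) := by
      simp [ite_mul]
    rw [hsum]
    have hneg : ∑ i, c.X ω i * -c.lamStar pi (Sum.inl i)
        = -∑ i, c.X ω i * c.lamStar pi (Sum.inl i) := by
      simp [mul_neg]
    rw [hneg]
    ring
  rw [hfun]
  beta_reduce
  rw [tilt_affine hc hX2 c.h0F ((memh0F hc).integrable one_le_two)
    (fun s i => -(c.vlam pi s i)) (fun s => -(c.lamStar pi (Sum.inr s))) ω]
  rw [XV_neg]
  ring

lemma tilt_rho1 (hc : c.PopAssumptions)
    (hX2 : Integrable (fun ω => ∑ i, (c.X ω i) ^ 2) c.P) (pi : ℝ) (ω : Ω) :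
    c.rho1 pi ω - c.cES (c.rho1 pi) ω
      = (c.h1F ω - c.cES c.h1F ω - c.XV c.nuYD1 ω) / pi
        + (c.XV c.nuYD1 ω - c.XV c.nuYD0 ω) := by
  haveI := hc.prob
  have hfun : c.rho1 pi = fun ω => (c.h1F ω / pi)
      + (∑ i, c.X ω i * ((1 - 1/pi) * c.nuYD1 (c.S ω) i + (-1) * c.nuYD0 (c.S ω) i))
      + (fun _ : 𝒮 => (0:ℝ)) (c.S ω) := by
    funext ω
    simp only [rho1, h1F]
    have hsum : ∑ i, c.X ω i * ((1 - 1/pi) * c.nuYD1 (c.S ω) i + (-1) * c.nuYD0 (c.S ω) i)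
        = (1 - 1/pi) * (∑ i, c.X ω i * c.nuYD1 (c.S ω) i)
          + (-1) * (∑ i, c.X ω i * c.nuYD0 (c.S ω) i) := by
      rw [Finset.sum_congr rfl (fun i (_ : i ∈ Finset.univ) =>
        (by ring : c.X ω i * ((1 - 1/pi) * c.nuYD1 (c.S ω) i + (-1) * c.nuYD0 (c.S ω) i)
          = (1 - 1/pi) * (c.X ω i * c.nuYD1 (c.S ω) i)
            + (-1) * (c.X ω i * c.nuYD0 (c.S ω) i))),
        Finset.sum_add_distrib, ← Finset.mul_sum, ← Finset.mul_sum]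
    rw [hsum]
    have hsub : ∑ i, c.X ω i * (c.nuYD1 (c.S ω) i - c.nuYD0 (c.S ω) i)
        = (∑ i, c.X ω i * c.nuYD1 (c.S ω) i) - ∑ i, c.X ω i * c.nuYD0 (c.S ω) i := by
      rw [← Finset.sum_sub_distrib]
      exact Finset.sum_congr rfl (fun i _ => by ring)
    rw [hsub]
    ring
  rw [hfun]
  beta_reduce
  rw [tilt_affine hc hX2 (fun ω' => c.h1F ω' / pi)
    (((memh1F hc).integrable one_le_two).div_const pi)
    (fun s i => (1 - 1/pi) * c.nuYD1 s i + (-1) * c.nuYD0 s i) (fun _ => (0:ℝ)) ω]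
  rw [XV_lin]
  have hdiv : c.cES (fun ω' => c.h1F ω' / pi) ω = c.cES c.h1F ω / pi := by
    simp only [cES]
    exact cEs_div _ _ _
  rw [hdiv]
  ring

lemma tilt_rho0 (hc : c.PopAssumptions)
    (hX2 : Integrable (fun ω => ∑ i, (c.X ω i) ^ 2) c.P) (pi : ℝ) (ω : Ω) :
    c.rho0 pi ω - c.cES (c.rho0 pi) ω
      = (c.h0F ω - c.cES c.h0F ω - c.XV c.nuYD0 ω) / (1 - pi)
        - (c.XV c.nuYD1 ω - c.XV c.nuYD0 ω) := by
  haveI := hc.prob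
  have hfun : c.rho0 pi = fun ω => (c.h0F ω / (1 - pi))
      + (∑ i, c.X ω i * ((-1) * c.nuYD1 (c.S ω) i
          + (1 - 1/(1 - pi)) * c.nuYD0 (c.S ω) i))
      + (fun _ : 𝒮 => (0:ℝ)) (c.S ω) := by
    funext ω
    simp only [rho0, h0F]
    have hsum : ∑ i, c.X ω i * ((-1) * c.nuYD1 (c.S ω) i
          + (1 - 1/(1 - pi)) * c.nuYD0 (c.S ω) i)
        = (-1) * (∑ i, c.X ω i * c.nuYD1 (c.S ω) i)
          + (1 - 1/(1 - pi)) * (∑ i, c.X ω i * c.nuYD0 (c.S ω) i) := by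
      rw [Finset.sum_congr rfl (fun i (_ : i ∈ Finset.univ) =>
        (by ring : c.X ω i * ((-1) * c.nuYD1 (c.S ω) i
            + (1 - 1/(1 - pi)) * c.nuYD0 (c.S ω) i)
          = (-1) * (c.X ω i * c.nuYD1 (c.S ω) i)
            + (1 - 1/(1 - pi)) * (c.X ω i * c.nuYD0 (c.S ω) i))),
        Finset.sum_add_distrib, ← Finset.mul_sum, ← Finset.mul_sum]
    rw [hsum]
    have hsub : ∑ i, c.X ω i * (c.nuYD1 (c.S ω) i - c.nuYD0 (c.S ω) i)
        = (∑ i, c.X ω i * c.nuYD1 (c.S ω) i) - ∑ i, c.X ω i * c.nuYD0 (c.S ω) i := by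
      rw [← Finset.sum_sub_distrib]
      exact Finset.sum_congr rfl (fun i _ => by ring)
    rw [hsub]
    ring
  rw [hfun]
  beta_reduce
  rw [tilt_affine hc hX2 (fun ω' => c.h0F ω' / (1 - pi))
    (((memh0F hc).integrable one_le_two).div_const (1 - pi))
    (fun s i => (-1) * c.nuYD1 s i + (1 - 1/(1 - pi)) * c.nuYD0 s i) (fun _ => (0:ℝ)) ω]
  rw [XV_lin]
  have hdiv : c.cES (fun ω' => c.h0F ω' / (1 - pi)) ω = c.cES c.h0F ω / (1 - pi) := by
    simp only [cES]
    exact cEs_div _ _ _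
  rw [hdiv]
  ring

/-- Division of an `L²` function by a constant. -/
lemma memDivC {P : Measure Ω} {f : Ω → ℝ} (hf : MemLp f 2 P) (r : ℝ) :
    MemLp (fun ω => f ω / r) 2 P := by
  have h := hf.const_mul r⁻¹
  refine MemLp.of_le h (h.aestronglyMeasurable.congr (ae_of_all _ fun ω => ?_))
    (ae_of_all _ fun ω => ?_)
  · show r⁻¹ * f ω = f ω / r
    rw [div_eq_mul_inv, mul_comm]
  · show ‖f ω / r‖ ≤ ‖r⁻¹ * f ω‖
    rw [div_eq_mul_inv, mul_comm]

/-- The key analytic inequality. -/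
lemma keylem {P : Measure Ω} [IsProbabilityMeasure P] {A B U1 U0 L : Ω → ℝ}
    (pi : ℝ) (hp0 : 0 < pi) (hp1 : pi < 1)
    (hA2 : MemLp A 2 P) (hB2 : MemLp B 2 P) (hU12 : MemLp U1 2 P)
    (hU02 : MemLp U0 2 P) (hL2 : MemLp L 2 P)
    (o1 : ∫ ω, (A ω - U1 ω) * (U1 ω - L ω) ∂P = 0)
    (o2 : ∫ ω, (B ω - U0 ω) * (U0 ω - L ω) ∂P = 0)
    (o3 : ∫ ω, (A ω - U1 ω) * (U1 ω - U0 ω) ∂P = 0)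
    (o4 : ∫ ω, (B ω - U0 ω) * (U1 ω - U0 ω) ∂P = 0) :
    (∫ ω, pi * ((A ω - U1 ω)/pi + (U1 ω - U0 ω))^2 ∂P)
      + (∫ ω, (1-pi) * ((B ω - U0 ω)/(1-pi) - (U1 ω - U0 ω))^2 ∂P)
    ≤ (∫ ω, (B ω - L ω)^2 ∂P)/(1-pi) + (∫ ω, (A ω - L ω)^2 ∂P)/pi := by
  have hq0 : (0:ℝ) < 1 - pi := by linarith
  have hAU1 : MemLp (fun ω => A ω - U1 ω) 2 P := hA2.sub hU12
  have hBU0 : MemLp (fun ω => B ω - U0 ω) 2 P := hB2.sub hU02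
  have hU1L : MemLp (fun ω => U1 ω - L ω) 2 P := hU12.sub hL2
  have hU0L : MemLp (fun ω => U0 ω - L ω) 2 P := hU02.sub hL2
  have hU1U0 : MemLp (fun ω => U1 ω - U0 ω) 2 P := hU12.sub hU02
  have hAL : MemLp (fun ω => A ω - L ω) 2 P := hA2.sub hL2
  have hBL : MemLp (fun ω => B ω - L ω) 2 P := hB2.sub hL2
  have hU1LU0L : MemLp (fun ω => (U1 ω - L ω) - (U0 ω - L ω)) 2 P := hU1L.sub hU0L
  set QQ : Ω → ℝ := fun ω => (U1 ω - L ω)^2/pi + (U0 ω - L ω)^2/(1-pi)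
    - ((U1 ω - L ω) - (U0 ω - L ω))^2 with hQQ_def
  set RR : Ω → ℝ := fun ω => 2*((A ω - U1 ω)*(U1 ω - L ω))/pi
    + 2*((B ω - U0 ω)*(U0 ω - L ω))/(1-pi)
    - 2*((A ω - U1 ω)*(U1 ω - U0 ω)) + 2*((B ω - U0 ω)*(U1 ω - U0 ω)) with hRR_def
  -- integrability
  have iρ1 : Integrable (fun ω => pi * ((A ω - U1 ω)/pi + (U1 ω - U0 ω))^2) P :=
    (((memDivC hAU1 pi).add hU1U0).integrable_sq).const_mul pi
  have iρ0 : Integrable (fun ω => (1-pi) * ((B ω - U0 ω)/(1-pi) - (U1 ω - U0 ω))^2) P :=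
    (((memDivC hBU0 (1-pi)).sub hU1U0).integrable_sq).const_mul (1-pi)
  have iε1 : Integrable (fun ω => (A ω - L ω)^2) P := hAL.integrable_sq
  have iε0 : Integrable (fun ω => (B ω - L ω)^2) P := hBL.integrable_sq
  have iQQ : Integrable QQ P := by
    have q1 : Integrable (fun ω => (U1 ω - L ω)^2/pi) P :=
      (hU1L.integrable_sq).div_const pi
    have q2 : Integrable (fun ω => (U0 ω - L ω)^2/(1-pi)) P :=
      (hU0L.integrable_sq).div_const (1-pi)
    have q3 : Integrable (fun ω => ((U1 ω - L ω) - (U0 ω - L ω))^2) P :=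
      hU1LU0L.integrable_sq
    have q12 : Integrable (fun ω => (U1 ω - L ω)^2/pi + (U0 ω - L ω)^2/(1-pi)) P :=
      q1.add q2
    exact q12.sub q3
  have t1 : Integrable (fun ω => 2*((A ω - U1 ω)*(U1 ω - L ω))/pi) P :=
    ((intMul hAU1 hU1L).const_mul 2).div_const pi
  have t2 : Integrable (fun ω => 2*((B ω - U0 ω)*(U0 ω - L ω))/(1-pi)) P :=
    ((intMul hBU0 hU0L).const_mul 2).div_const (1-pi)
  have t3 : Integrable (fun ω => 2*((A ω - U1 ω)*(U1 ω - U0 ω))) P :=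
    (intMul hAU1 hU1U0).const_mul 2
  have t4 : Integrable (fun ω => 2*((B ω - U0 ω)*(U1 ω - U0 ω))) P :=
    (intMul hBU0 hU1U0).const_mul 2
  have t12 : Integrable (fun ω => 2*((A ω - U1 ω)*(U1 ω - L ω))/pi
      + 2*((B ω - U0 ω)*(U0 ω - L ω))/(1-pi)) P := t1.add t2
  have t123 : Integrable (fun ω => 2*((A ω - U1 ω)*(U1 ω - L ω))/pi
      + 2*((B ω - U0 ω)*(U0 ω - L ω))/(1-pi) - 2*((A ω - U1 ω)*(U1 ω - U0 ω))) P :=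
    t12.sub t3
  have iRR : Integrable RR P := t123.add t4
  -- ∫ RR = 0
  have hRR0 : ∫ ω, RR ω ∂P = 0 := by
    have e1 : ∫ ω, 2*((A ω - U1 ω)*(U1 ω - L ω))/pi ∂P
        = (2 * ∫ ω, (A ω - U1 ω)*(U1 ω - L ω) ∂P)/pi := by
      rw [integral_div, integral_const_mul]
    have e2 : ∫ ω, 2*((B ω - U0 ω)*(U0 ω - L ω))/(1-pi) ∂P
        = (2 * ∫ ω, (B ω - U0 ω)*(U0 ω - L ω) ∂P)/(1-pi) := by
      rw [integral_div, integral_const_mul]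
    have e3 : ∫ ω, 2*((A ω - U1 ω)*(U1 ω - U0 ω)) ∂P
        = 2 * ∫ ω, (A ω - U1 ω)*(U1 ω - U0 ω) ∂P := integral_const_mul 2 _
    have e4 : ∫ ω, 2*((B ω - U0 ω)*(U1 ω - U0 ω)) ∂P
        = 2 * ∫ ω, (B ω - U0 ω)*(U1 ω - U0 ω) ∂P := integral_const_mul 2 _
    have hsplit : ∫ ω, RR ω ∂P
        = (∫ ω, 2*((A ω - U1 ω)*(U1 ω - L ω))/pi ∂P)
          + (∫ ω, 2*((B ω - U0 ω)*(U0 ω - L ω))/(1-pi) ∂P)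
          - (∫ ω, 2*((A ω - U1 ω)*(U1 ω - U0 ω)) ∂P)
          + (∫ ω, 2*((B ω - U0 ω)*(U1 ω - U0 ω)) ∂P) := by
      rw [hRR_def]
      rw [integral_add t123 t4, integral_sub t12 t3, integral_add t1 t2]
    rw [hsplit, e1, e2, e3, e4, o1, o2, o3, o4]
    norm_num
  -- ∫ QQ ≥ 0
  have hQQ0 : 0 ≤ ∫ ω, QQ ω ∂P := by
    refine integral_nonneg (fun ω => ?_)
    have hkey : QQ ω = ((1-pi)*(U1 ω - L ω) + pi*(U0 ω - L ω))^2/(pi*(1-pi)) := by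
      rw [hQQ_def]
      field_simp
      ring
    rw [hkey]
    exact div_nonneg (sq_nonneg _) (mul_pos hp0 hq0).le
  -- combine
  have hAdd : ∫ ω, (QQ ω + RR ω) ∂P = (∫ ω, QQ ω ∂P) + ∫ ω, RR ω ∂P :=
    integral_add iQQ iRR
  have iε0' : Integrable (fun ω => (B ω - L ω)^2/(1-pi)) P := iε0.div_const _
  have iε1' : Integrable (fun ω => (A ω - L ω)^2/pi) P := iε1.div_const _
  have iJ : Integrable (fun ω => (B ω - L ω)^2/(1-pi) + (A ω - L ω)^2/pi) P :=
    iε0'.add iε1'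
  have iI : Integrable (fun ω => pi * ((A ω - U1 ω)/pi + (U1 ω - U0 ω))^2
      + (1-pi) * ((B ω - U0 ω)/(1-pi) - (U1 ω - U0 ω))^2) P := iρ1.add iρ0
  have hEq : ∫ ω, (QQ ω + RR ω) ∂P
      = (∫ ω, (B ω - L ω)^2 ∂P)/(1-pi) + (∫ ω, (A ω - L ω)^2 ∂P)/pi
        - ((∫ ω, pi * ((A ω - U1 ω)/pi + (U1 ω - U0 ω))^2 ∂P)
          + (∫ ω, (1-pi) * ((B ω - U0 ω)/(1-pi) - (U1 ω - U0 ω))^2 ∂P)) := by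
    rw [← integral_div (1-pi) (fun ω => (B ω - L ω)^2),
      ← integral_div pi (fun ω => (A ω - L ω)^2),
      ← integral_add iε0' iε1', ← integral_add iρ1 iρ0, ← integral_sub iJ iI]
    refine integral_congr_ae (ae_of_all _ fun ω => ?_)
    rw [hQQ_def, hRR_def]
    field_simp
    ring
  linarith [hAdd, hEq, hRR0, hQQ0]

end Aux

end CARPop


open CARPop in
/-- Under a homogeneous assignment probability `π`, the asymptotic
variance of the S estimator of Ansel, Hong and Li (2018) is weakly smaller than that of
the TSLS estimator with covariates and strata fixed effects: `σ_S² ≤ σ_TSLS²`. -/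
theorem stmt19 {Ω : Type*} [MeasurableSpace Ω] {𝒮 : Type*} [Fintype 𝒮] [DecidableEq 𝒮]
    [MeasurableSpace 𝒮] [MeasurableSingletonClass 𝒮] {d : ℕ}
    (c : CARPop Ω 𝒮 d) (hc : PopAssumptions c)
    (pi : ℝ) (hpi0 : 0 < pi) (hpi1 : pi < 1) (hpiS : ∀ s, c.piS s = pi)
    (hX2 : Integrable (fun ω => ∑ i, (c.X ω i) ^ 2) c.P)
    (hMXX : IsUnit c.MXX.det)
    (hgramX : ∀ s, IsUnit (c.gramX s).det)
    (γ : 𝒮 → ℝ) (hγ : ∀ s, 0 ≤ γ s ∧ γ s ≤ pi * (1 - pi)) :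
    c.sigmaSqS pi ≤ c.sigmaSqTSLS pi γ := by
  haveI := hc.prob
  have hJ1 : (∫ ω, (c.eps1 pi ω - c.cES (c.eps1 pi) ω) ^ 2 ∂c.P)
      = ∫ ω, (c.h1F ω - c.cES c.h1F ω - c.XV (c.vlam pi) ω) ^ 2 ∂c.P :=
    integral_congr_ae (ae_of_all _ fun ω => by beta_reduce; rw [tilt_eps1 hc hX2 pi ω])
  have hJ0 : (∫ ω, (c.eps0 pi ω - c.cES (c.eps0 pi) ω) ^ 2 ∂c.P)
      = ∫ ω, (c.h0F ω - c.cES c.h0F ω - c.XV (c.vlam pi) ω) ^ 2 ∂c.P :=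
    integral_congr_ae (ae_of_all _ fun ω => by beta_reduce; rw [tilt_eps0 hc hX2 pi ω])
  have hI1 : (∫ ω, pi * (c.rho1 pi ω - c.cES (c.rho1 pi) ω) ^ 2 ∂c.P)
      = ∫ ω, pi * ((c.h1F ω - c.cES c.h1F ω - c.XV c.nuYD1 ω) / pi
          + (c.XV c.nuYD1 ω - c.XV c.nuYD0 ω)) ^ 2 ∂c.P :=
    integral_congr_ae (ae_of_all _ fun ω => by beta_reduce; rw [tilt_rho1 hc hX2 pi ω])
  have hI0 : (∫ ω, (1 - pi) * (c.rho0 pi ω - c.cES (c.rho0 pi) ω) ^ 2 ∂c.P)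
      = ∫ ω, (1 - pi) * ((c.h0F ω - c.cES c.h0F ω - c.XV c.nuYD0 ω) / (1 - pi)
          - (c.XV c.nuYD1 ω - c.XV c.nuYD0 ω)) ^ 2 ∂c.P :=
    integral_congr_ae (ae_of_all _ fun ω => by beta_reduce; rw [tilt_rho0 hc hX2 pi ω])
  have hA2 : MemLp (fun ω => c.h1F ω - c.cES c.h1F ω) 2 c.P :=
    (memh1F hc).sub (memS hc (fun s => c.cEs s c.h1F))
  have hB2 : MemLp (fun ω => c.h0F ω - c.cES c.h0F ω) 2 c.P :=
    (memh0F hc).sub (memS hc (fun s => c.cEs s c.h0F))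
  have hU12 : MemLp (c.XV c.nuYD1) 2 c.P := memXV hc hX2 _
  have hU02 : MemLp (c.XV c.nuYD0) 2 c.P := memXV hc hX2 _
  have hL2 : MemLp (c.XV (c.vlam pi)) 2 c.P := memXV hc hX2 _
  have hnu1 : ∀ s, c.nuYD1 s = Matrix.mulVec (c.gramX s)⁻¹
      (fun i => c.cEs s (fun ω => c.xTilt s ω i * c.h1F ω)) := fun s => rfl
  have hnu0 : ∀ s, c.nuYD0 s = Matrix.mulVec (c.gramX s)⁻¹
      (fun i => c.cEs s (fun ω => c.xTilt s ω i * c.h0F ω)) := fun s => rfl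
  have o1 : ∫ ω, (c.h1F ω - c.cES c.h1F ω - c.XV c.nuYD1 ω)
      * (c.XV c.nuYD1 ω - c.XV (c.vlam pi) ω) ∂c.P = 0 := by
    have h := ortho hc hX2 hgramX (memh1F hc) c.nuYD1 hnu1
      (fun s i => c.nuYD1 s i - c.vlam pi s i)
    rw [← h]
    exact integral_congr_ae (ae_of_all _ fun ω => by beta_reduce; rw [XV_sub])
  have o2 : ∫ ω, (c.h0F ω - c.cES c.h0F ω - c.XV c.nuYD0 ω)
      * (c.XV c.nuYD0 ω - c.XV (c.vlam pi) ω) ∂c.P = 0 := by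
    have h := ortho hc hX2 hgramX (memh0F hc) c.nuYD0 hnu0
      (fun s i => c.nuYD0 s i - c.vlam pi s i)
    rw [← h]
    exact integral_congr_ae (ae_of_all _ fun ω => by beta_reduce; rw [XV_sub])
  have o3 : ∫ ω, (c.h1F ω - c.cES c.h1F ω - c.XV c.nuYD1 ω)
      * (c.XV c.nuYD1 ω - c.XV c.nuYD0 ω) ∂c.P = 0 := by
    have h := ortho hc hX2 hgramX (memh1F hc) c.nuYD1 hnu1
      (fun s i => c.nuYD1 s i - c.nuYD0 s i)
    rw [← h]
    exact integral_congr_ae (ae_of_all _ fun ω => by beta_reduce; rw [XV_sub])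
  have o4 : ∫ ω, (c.h0F ω - c.cES c.h0F ω - c.XV c.nuYD0 ω)
      * (c.XV c.nuYD1 ω - c.XV c.nuYD0 ω) ∂c.P = 0 := by
    have h := ortho hc hX2 hgramX (memh0F hc) c.nuYD0 hnu0
      (fun s i => c.nuYD1 s i - c.nuYD0 s i)
    rw [← h]
    exact integral_congr_ae (ae_of_all _ fun ω => by beta_reduce; rw [XV_sub])
  have hGam : 0 ≤ ∫ ω, γ (c.S ω)
      * (c.cES (fun ω' => c.eps1 pi ω' / pi + c.eps0 pi ω' / (1 - pi)) ω) ^ 2 ∂c.P :=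
    integral_nonneg (fun ω => mul_nonneg (hγ _).1 (sq_nonneg _))
  have key := keylem (P := c.P) pi hpi0 hpi1 hA2 hB2 hU12 hU02 hL2 o1 o2 o3 o4
  beta_reduce at key
  unfold sigmaSqS sigmaSqTSLS
  refine div_le_div_of_nonneg_right ?_ (sq_nonneg _)
  rw [hI1, hI0, hJ1, hJ0]
  linarith [key, hGam]
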